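/- Discrete Poincaré inequality: let x = (x_0,…,x_{2k}) ∈ ℝ^{2k+1} satisfy ∑_{n=0}^{2k} x_n = 0. Then ∑_{n=0}^{2k} x_n² ≤ 4(2k+1)² · ∑_{n=0}^{2k-1} (x_{n+1} - x_n)². -/
import Mathlib

theorem discrete_poincare (k : ℕ) (hk : 1 ≤ k) (x : ℕ → ℝ)
    (hsum : ∑ n ∈ Finset.range (2 * k + 1), x n = 0) :
    ∑ n ∈ Finset.range (2 * k + 1), (x n) ^ 2 ≤
      4 * (2 * (k : ℝ) + 1) ^ 2 * ∑ n ∈ Finset.range (2 * k), (x (n + 1) - x n) ^ 2 := by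
  set N := 2 * k + 1 with hN
  set T : ℝ := ∑ n ∈ Finset.range (2 * k), |x (n + 1) - x n| with hT
  set S : ℝ := ∑ n ∈ Finset.range (2 * k), (x (n + 1) - x n) ^ 2 with hS
  have hS0 : 0 ≤ S := Finset.sum_nonneg fun _ _ => sq_nonneg _
  -- telescope bound
  have key : ∀ a b : ℕ, a < N → b < N → |x a - x b| ≤ T := by
    have h2 : ∀ a b : ℕ, a ≤ b → b < N → |x b - x a| ≤ T := by
      intro a b hab hbN
      have htel : x b - x a = ∑ n ∈ Finset.Ico a b, (x (n + 1) - x n) := by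
        rw [Finset.sum_Ico_eq_sub _ hab, Finset.sum_range_sub, Finset.sum_range_sub]
        ring
      rw [htel]
      calc |∑ n ∈ Finset.Ico a b, (x (n + 1) - x n)|
          ≤ ∑ n ∈ Finset.Ico a b, |x (n + 1) - x n| := Finset.abs_sum_le_sum_abs _ _
        _ ≤ T := by
            apply Finset.sum_le_sum_of_subset_of_nonneg
            · intro n hn
              simp only [Finset.mem_Ico] at hn
              simp only [Finset.mem_range]
              omega
            · intro _ _ _; exact abs_nonneg _
    intro a b ha hb
    rcases le_total a b with h | h
    · rw [abs_sub_comm]; exact h2 a b h hb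
    · exact h2 b a h ha
  -- each |x m| ≤ T
  have hxT : ∀ m ∈ Finset.range N, |x m| ≤ T := by
    intro m hm
    rw [Finset.mem_range] at hm
    have hNx : (N : ℝ) * x m = ∑ j ∈ Finset.range N, (x m - x j) := by
      rw [Finset.sum_sub_distrib, hsum, Finset.sum_const, Finset.card_range]
      push_cast; ring
    have h1 : |(N : ℝ) * x m| ≤ ∑ j ∈ Finset.range N, |x m - x j| := by
      rw [hNx]; exact Finset.abs_sum_le_sum_abs _ _
    have h2 : ∑ j ∈ Finset.range N, |x m - x j| ≤ (N : ℝ) * T := by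
      calc ∑ j ∈ Finset.range N, |x m - x j|
          ≤ ∑ _j ∈ Finset.range N, T := Finset.sum_le_sum fun j hj => by
            rw [Finset.mem_range] at hj; exact key m j hm hj
        _ = (N : ℝ) * T := by rw [Finset.sum_const, Finset.card_range]; simp
    have hNpos : (0:ℝ) < (N : ℝ) := by positivity
    rw [abs_mul, abs_of_pos hNpos] at h1
    have := h1.trans h2
    exact le_of_mul_le_mul_left this hNpos
  -- T² ≤ 2k * S
  have hT2 : T ^ 2 ≤ (2 * k : ℝ) * S := by
    have := sq_sum_le_card_mul_sum_sq (s := Finset.range (2 * k))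
      (f := fun n => |x (n + 1) - x n|)
    simp only [Finset.card_range, sq_abs] at this
    rw [hT, hS]
    exact_mod_cast this
  -- sum of squares bound
  have hsum2 : ∑ n ∈ Finset.range N, (x n) ^ 2 ≤ (N : ℝ) * T ^ 2 := by
    calc ∑ n ∈ Finset.range N, (x n) ^ 2
        ≤ ∑ _n ∈ Finset.range N, T ^ 2 := Finset.sum_le_sum fun n hn => by
          have := hxT n hn
          have h0 : 0 ≤ |x n| := abs_nonneg _
          nlinarith [sq_abs (x n)]
      _ = (N : ℝ) * T ^ 2 := by rw [Finset.sum_const, Finset.card_range]; simp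
  have hNle : (N : ℝ) = 2 * (k : ℝ) + 1 := by push_cast [hN]; ring
  have hk1 : (1:ℝ) ≤ k := by exact_mod_cast hk
  calc ∑ n ∈ Finset.range N, (x n) ^ 2 ≤ (N : ℝ) * T ^ 2 := hsum2
    _ ≤ (N : ℝ) * ((2 * k : ℝ) * S) := by
        apply mul_le_mul_of_nonneg_left hT2 (by positivity)
    _ ≤ 4 * (2 * (k : ℝ) + 1) ^ 2 * S := by rw [hNle]; nlinarith
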